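/- Let H and K be two distinct subgroups of a discrete group G. Then, inside the reduced group C*-algebra C*_r(G), the Kadison-Kastler distance between the group *-algebras satisfies d_KK(ℂ[H], ℂ[K]) = 1, and consequently d_KK(C*_r(H), C*_r(K)) = 1. -/

import Mathlib

open Metric

-- membership in adjoin gives finsupp combination
lemma aux_span {G A : Type*} [Group G]
    [NormedRing A] [NormedAlgebra ℂ A]
    (lam : G → A)
    (hlam_mul : ∀ g h : G, lam (g * h) = lam g * lam h)
    (hlam_one : lam 1 = 1)
    (K : Subgroup G) {x : A} (hx : x ∈ Algebra.adjoin ℂ (lam '' (K : Set G))) :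
    ∃ c : K →₀ ℂ, (c.sum fun k a => a • lam ↑k) = x := by
  let φ : G →* A := { toFun := lam, map_one' := hlam_one, map_mul' := hlam_mul }
  have h1 : x ∈ Subalgebra.toSubmodule (Algebra.adjoin ℂ (lam '' (K : Set G))) := hx
  rw [Algebra.adjoin_eq_span] at h1
  have h2 : (Submonoid.closure (lam '' (K : Set G)) : Set A) = lam '' (K : Set G) := by
    have h3 : lam '' (K : Set G) = ⇑φ '' (K.toSubmonoid : Set G) := rfl
    rw [h3, ← MonoidHom.map_mclosure, Submonoid.closure_eq, Submonoid.coe_map]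
  rw [h2] at h1
  have h4 : lam '' (K : Set G) = Set.range (fun k : K => lam ↑k) := by
    ext a; simp [Set.mem_image]
  rw [h4] at h1
  exact Finsupp.mem_span_range_iff_exists_finsupp.mp h1

lemma aux_dist {G A : Type*} [Group G] [DecidableEq G]
    [NormedRing A] [StarRing A] [NormedAlgebra ℂ A] [StarModule ℂ A]
    (lam : G → A)
    (hlam_mul : ∀ g h : G, lam (g * h) = lam g * lam h)
    (hlam_one : lam 1 = 1)
    (τ : A →ₗ[ℂ] ℂ)
    (hτ_state : ∀ a : A, ‖τ (star a * a)‖ ≤ ‖a‖ ^ 2)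
    (hτ_orth : ∀ g h : G, τ (star (lam g) * lam h) = if g = h then 1 else 0)
    (K : Subgroup G) {g : G} (hgK : g ∉ K)
    {x : A} (hx : x ∈ Algebra.adjoin ℂ (lam '' (K : Set G))) :
    1 ≤ ‖lam g - x‖ := by
  obtain ⟨c, rfl⟩ := aux_span lam hlam_mul hlam_one K hx
  set s := c.support with hs
  have hxsum : (c.sum fun k a => a • lam ↑k) = ∑ k ∈ s, c k • lam ↑k := rfl
  set x : A := ∑ k ∈ s, c k • lam ↑k with hxdef
  rw [hxsum]
  set a : A := lam g - x with ha
  have expand : star a * a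
      = star (lam g) * lam g - star (lam g) * x - star x * lam g + star x * x := by
    rw [ha, star_sub]; noncomm_ring
  have t1 : τ (star (lam g) * lam g) = 1 := by simpa using hτ_orth g g
  have t2 : τ (star (lam g) * x) = 0 := by
    rw [hxdef, Finset.mul_sum, map_sum]
    refine Finset.sum_eq_zero fun k hk => ?_
    rw [mul_smul_comm, map_smul, hτ_orth g ↑k, if_neg, smul_zero]
    rintro rfl; exact hgK k.2
  have t3 : τ (star x * lam g) = 0 := by
    rw [hxdef, star_sum, Finset.sum_mul, map_sum]
    refine Finset.sum_eq_zero fun k hk => ?_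
    rw [star_smul, smul_mul_assoc, map_smul, hτ_orth ↑k g, if_neg, smul_zero]
    rintro rfl; exact hgK k.2
  have t4 : τ (star x * x) = ((∑ k ∈ s, Complex.normSq (c k) : ℝ) : ℂ) := by
    rw [hxdef, star_sum, Finset.sum_mul, map_sum]
    push_cast
    refine Finset.sum_congr rfl fun k hk => ?_
    rw [star_smul, smul_mul_assoc, map_smul, Finset.mul_sum, map_sum]
    have : ∀ j ∈ s, τ (star (lam ↑k) * (c j • lam ↑j))
        = if k = j then c j else 0 := by
      intro j hj
      rw [mul_smul_comm, map_smul, hτ_orth ↑k ↑j]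
      by_cases h : k = j
      · subst h; rw [if_pos rfl, if_pos rfl, smul_eq_mul, mul_one]
      · rw [if_neg (fun e => h (Subtype.ext e)), if_neg h, smul_zero]
    rw [Finset.sum_congr rfl this, Finset.sum_ite_eq c.support k (fun j => c j), if_pos hk]
    rw [smul_eq_mul, Complex.normSq_eq_conj_mul_self, Complex.star_def]
  have key : τ (star a * a) = ((1 + ∑ k ∈ s, Complex.normSq (c k) : ℝ) : ℂ) := by
    rw [expand, map_add, map_sub, map_sub, t1, t2, t3, t4]
    push_cast; ring
  have habs : 1 ≤ ‖τ (star a * a)‖ := by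
    rw [key, Complex.norm_real, Real.norm_eq_abs, abs_of_nonneg]
    · nlinarith [Finset.sum_nonneg (fun k (_ : k ∈ s) => Complex.normSq_nonneg (c k))]
    · nlinarith [Finset.sum_nonneg (fun k (_ : k ∈ s) => Complex.normSq_nonneg (c k))]
  have := hτ_state a
  nlinarith [norm_nonneg a]

lemma aux_dKK' {A : Type*} [NormedRing A] {S T : Set A} (h0S : 0 ∈ S) (h0T : 0 ∈ T)
    {p : A} (hpS : p ∈ S) (hp1 : ‖p‖ ≤ 1) (hd : ∀ y ∈ T, 1 ≤ ‖p - y‖) :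
    Metric.hausdorffDist (S ∩ Metric.closedBall 0 1) (T ∩ Metric.closedBall 0 1) = 1 := by
  set S' := S ∩ Metric.closedBall (0:A) 1 with hS'
  set T' := T ∩ Metric.closedBall (0:A) 1 with hT'
  have h0S' : (0:A) ∈ S' := ⟨h0S, by simp⟩
  have h0T' : (0:A) ∈ T' := ⟨h0T, by simp⟩
  have hpS' : p ∈ S' := ⟨hpS, by simpa [mem_closedBall_zero_iff] using hp1⟩
  have hbS : Bornology.IsBounded S' := (isBounded_closedBall).subset Set.inter_subset_right
  have hbT : Bornology.IsBounded T' := (isBounded_closedBall).subset Set.inter_subset_right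
  have hfin : EMetric.hausdorffEdist S' T' ≠ ⊤ :=
    hausdorffEdist_ne_top_of_nonempty_of_bounded ⟨0, h0S'⟩ ⟨0, h0T'⟩ hbS hbT
  apply le_antisymm
  · refine hausdorffDist_le_of_mem_dist zero_le_one ?_ ?_
    · intro x hx
      exact ⟨0, h0T', by simpa [dist_zero_right] using mem_closedBall_zero_iff.mp hx.2⟩
    · intro y hy
      exact ⟨0, h0S', by simpa [dist_zero_right] using mem_closedBall_zero_iff.mp hy.2⟩
  · have hE : (1:ENNReal) ≤ EMetric.infEdist p T' := by
      refine EMetric.le_infEdist.mpr ?_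
      intro y hy
      rw [edist_dist]
      calc (1:ENNReal) = ENNReal.ofReal 1 := by simp
        _ ≤ ENNReal.ofReal (dist p y) :=
            ENNReal.ofReal_le_ofReal (by rw [dist_eq_norm]; exact hd y hy.1)
    have hne : EMetric.infEdist p T' ≠ ⊤ := infEdist_ne_top ⟨0, h0T'⟩
    have h1 : 1 ≤ infDist p T' := by
      calc (1:ℝ) = (1:ENNReal).toReal := by simp
        _ ≤ (EMetric.infEdist p T').toReal := ENNReal.toReal_mono hne hE
        _ = infDist p T' := rfl
    exact le_trans h1 (infDist_le_hausdorffDist_of_mem hpS' hfin)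

lemma aux_master {G A : Type*} [Group G] [DecidableEq G]
    [NormedRing A] [StarRing A] [NormedAlgebra ℂ A] [StarModule ℂ A]
    (lam : G → A)
    (hlam_mul : ∀ g h : G, lam (g * h) = lam g * lam h)
    (hlam_one : lam 1 = 1)
    (hlam_norm : ∀ g : G, ‖lam g‖ = 1)
    (τ : A →ₗ[ℂ] ℂ)
    (hτ_state : ∀ a : A, ‖τ (star a * a)‖ ≤ ‖a‖ ^ 2)
    (hτ_orth : ∀ g h : G, τ (star (lam g) * lam h) = if g = h then 1 else 0)
    (H K : Subgroup G) {g : G} (hgH : g ∈ H) (hgK : g ∉ K) :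
    Metric.hausdorffDist
      ((↑(Algebra.adjoin ℂ (lam '' (H : Set G))) : Set A) ∩ Metric.closedBall 0 1)
      ((↑(Algebra.adjoin ℂ (lam '' (K : Set G))) : Set A) ∩ Metric.closedBall 0 1) = 1 ∧
    Metric.hausdorffDist
      (closure (↑(Algebra.adjoin ℂ (lam '' (H : Set G))) : Set A) ∩ Metric.closedBall 0 1)
      (closure (↑(Algebra.adjoin ℂ (lam '' (K : Set G))) : Set A) ∩ Metric.closedBall 0 1)
      = 1 := by
  set S : Set A := ↑(Algebra.adjoin ℂ (lam '' (H : Set G))) with hS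
  set T : Set A := ↑(Algebra.adjoin ℂ (lam '' (K : Set G))) with hT
  have h0S : (0:A) ∈ S := Subalgebra.zero_mem _
  have h0T : (0:A) ∈ T := Subalgebra.zero_mem _
  have hpS : lam g ∈ S := Algebra.subset_adjoin ⟨g, hgH, rfl⟩
  have hp1 : ‖lam g‖ ≤ 1 := le_of_eq (hlam_norm g)
  have hd : ∀ y ∈ T, 1 ≤ ‖lam g - y‖ := fun y hy =>
    aux_dist lam hlam_mul hlam_one τ hτ_state hτ_orth K hgK hy
  have hclosed : IsClosed {y : A | 1 ≤ ‖lam g - y‖} :=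
    isClosed_le continuous_const ((continuous_const.sub continuous_id).norm)
  have hd' : ∀ y ∈ closure T, 1 ≤ ‖lam g - y‖ :=
    fun y hy => closure_minimal hd hclosed hy
  exact ⟨aux_dKK' h0S h0T hpS hp1 hd,
    aux_dKK' (subset_closure h0S) (subset_closure h0T) (subset_closure hpS) hp1 hd'⟩


/-- The Kadison-Kastler distance between two subsets of a normed algebra:
the Hausdorff distance between their closed unit balls. -/
noncomputable def dKK {A : Type*} [NormedRing A] (C D : Set A) : ℝ :=
  Metric.hausdorffDist (C ∩ Metric.closedBall 0 1) (D ∩ Metric.closedBall 0 1)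

/-- Let `H` and `K` be distinct subgroups of a discrete group `G`. Inside the reduced
group C*-algebra `C*_r(G)` (presented abstractly as a C*-algebra `A` generated by
unitaries `λ_g` together with the canonical trace), the Kadison-Kastler distance
between the group `*`-algebras satisfies `d_KK(ℂ[H], ℂ[K]) = 1`, and consequently
`d_KK(C*_r(H), C*_r(K)) = 1`. -/
theorem stmt14 {G A : Type*} [Group G] [DecidableEq G]
    [NormedRing A] [StarRing A] [CStarRing A] [NormedAlgebra ℂ A]
    [StarModule ℂ A] [CompleteSpace A]
    (lam : G → A)
    (hlam_mul : ∀ g h : G, lam (g * h) = lam g * lam h)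
    (hlam_one : lam 1 = 1)
    (hlam_star : ∀ g : G, star (lam g) = lam g⁻¹)
    (hlam_norm : ∀ g : G, ‖lam g‖ = 1)
    (τ : A →ₗ[ℂ] ℂ)
    (hτ_state : ∀ a : A, ‖τ (star a * a)‖ ≤ ‖a‖ ^ 2)
    (hτ_orth : ∀ g h : G, τ (star (lam g) * lam h) = if g = h then 1 else 0)
    (H K : Subgroup G) (hHK : H ≠ K) :
    dKK (↑(Algebra.adjoin ℂ (lam '' (H : Set G))) : Set A)
        (↑(Algebra.adjoin ℂ (lam '' (K : Set G))) : Set A) = 1 ∧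
    dKK (closure (↑(Algebra.adjoin ℂ (lam '' (H : Set G))) : Set A))
        (closure (↑(Algebra.adjoin ℂ (lam '' (K : Set G))) : Set A)) = 1 := by
  have hex : ∃ g, ¬ (g ∈ H ↔ g ∈ K) := by
    by_contra h
    push_neg at h
    exact hHK (Subgroup.ext fun g => h g)
  obtain ⟨g, hg⟩ := hex
  by_cases hgH : g ∈ H
  · have hgK : g ∉ K := fun hk => hg ⟨fun _ => hk, fun _ => hgH⟩
    obtain ⟨h1, h2⟩ := aux_master lam hlam_mul hlam_one hlam_norm τ hτ_state hτ_orth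
      H K hgH hgK
    exact ⟨h1, h2⟩
  · have hgK : g ∈ K := by
      by_contra hk
      exact hg ⟨fun h => absurd h hgH, fun h => absurd h hk⟩
    obtain ⟨h1, h2⟩ := aux_master lam hlam_mul hlam_one hlam_norm τ hτ_state hτ_orth
      K H hgK hgH
    constructor
    · unfold dKK; rw [Metric.hausdorffDist_comm]; exact h1
    · unfold dKK; rw [Metric.hausdorffDist_comm]; exact h2
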